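/- Let (b_n)_{n≥0} be positive, {s} = b_{s-1}^2/b_0^2, {n}! = {n}{n-1}⋯{1}, and let α_{2m-1,n-1} be the nested-sum coefficients defined by α_{-1,n-1}=1 and α_{2m-1,n-1} = Σ_{k_1=2m-1}^{n-1}{k_1} Σ_{k_2=2m-3}^{k_1-2}{k_2} ⋯ Σ_{k_m=1}^{k_{m-1}-2}{k_m}. Then the polynomials Ψ_n(x) = Σ_{m=0}^{⌊n/2⌋} ((-1)^m / √({n}!)) α_{2m-1,n-1} b_0^{2m-n} x^{n-2m} satisfy the three-term recurrence b_n Ψ_{n+1}(x) + b_{n-1} Ψ_{n-1}(x) = x Ψ_n(x) with Ψ_0 = 1, Ψ_{-1} = 0. -/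

import Mathlib

/-- `jacobiAlpha br m N` is the coefficient `α_{2m-1, N}` given by the nested sums,
with `α_{-1,N} = 1` (the case `m = 0`); `br s` stands for `{s} = b_{s-1}²/b₀²`. -/
def jacobiAlpha (br : ℕ → ℝ) : ℕ → ℕ → ℝ
  | 0, _ => 1
  | m + 1, N => ∑ k ∈ Finset.Icc (2 * (m + 1) - 1) N, br k * jacobiAlpha br m (k - 2)

/-- `braceFact br n = {n}! = {n}{n-1}⋯{1}` (with `{0}! = 1`). -/
def braceFact (br : ℕ → ℝ) (n : ℕ) : ℝ := ∏ s ∈ Finset.Icc 1 n, br s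

lemma jacobiAlpha_zero (br : ℕ → ℝ) (N : ℕ) : jacobiAlpha br 0 N = 1 := rfl

lemma jacobiAlpha_succ (br : ℕ → ℝ) (m N : ℕ) :
    jacobiAlpha br (m+1) N
      = ∑ k ∈ Finset.Icc (2*(m+1)-1) N, br k * jacobiAlpha br m (k-2) := rfl

lemma jacobiAlpha_vanish (br : ℕ → ℝ) (m N : ℕ) (h : N < 2*m+1) :
    jacobiAlpha br (m+1) N = 0 := by
  rw [jacobiAlpha_succ, Finset.Icc_eq_empty (by omega), Finset.sum_empty]

lemma jacobiAlpha_step (br : ℕ → ℝ) (m N : ℕ) :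
    jacobiAlpha br (m+1) (N+1) =
      jacobiAlpha br (m+1) N + br (N+1) * jacobiAlpha br m (N-1) := by
  rcases le_or_gt (2*(m+1)-1) (N+1) with h | h
  · rw [jacobiAlpha_succ br m (N+1), Finset.sum_Icc_succ_top h, ← jacobiAlpha_succ,
      show N+1-2 = N-1 from by omega]
  · rw [jacobiAlpha_vanish br m N (by omega), jacobiAlpha_vanish br m (N+1) (by omega)]
    match m with
    | 0 => exact absurd h (by omega)
    | m'+1 =>
      rw [jacobiAlpha_vanish br m' (N-1) (by omega)]
      ring

noncomputable def psiTerm (b br : ℕ → ℝ) (n m : ℕ) (x : ℝ) : ℝ :=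
  ((-1:ℝ)^m / Real.sqrt (braceFact br n)) * jacobiAlpha br m (n-1) *
    ((b 0)^(2*m)/(b 0)^n) * x^(n-2*m)

lemma psiTerm_vanish (b br : ℕ → ℝ) (n m : ℕ) (x : ℝ) (h : n/2 + 1 ≤ m) :
    psiTerm b br n m x = 0 := by
  match m with
  | m'+1 =>
    unfold psiTerm
    rw [jacobiAlpha_vanish br m' (n-1) (by omega)]
    ring

lemma psi_sum_ext (b br : ℕ → ℝ) (n M : ℕ) (x : ℝ) (h : n/2+1 ≤ M) :
    ∑ m ∈ Finset.range (n/2+1), psiTerm b br n m x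
      = ∑ m ∈ Finset.range M, psiTerm b br n m x := by
  refine Finset.sum_subset (Finset.range_subset_range.2 h) ?_
  intro m _ hm
  exact psiTerm_vanish b br n m x (by simpa using hm)

section Key

variable (b br : ℕ → ℝ) (hb : ∀ n, 0 < b n)
  (hbr : ∀ s : ℕ, br s = (b (s - 1)) ^ 2 / (b 0) ^ 2)

include hb hbr

lemma braceFact_pos (N : ℕ) : 0 < braceFact br N := by
  refine Finset.prod_pos fun s _ => ?_
  rw [hbr]
  have := hb (s-1); have := hb 0
  positivity

lemma sqrt_braceFact_succ (N : ℕ) :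
    Real.sqrt (braceFact br (N+1)) = Real.sqrt (braceFact br N) * (b N / b 0) := by
  have h1 : braceFact br (N+1) = braceFact br N * br (N+1) :=
    Finset.prod_Icc_succ_top (by omega) _
  rw [h1, Real.sqrt_mul (braceFact_pos b br hb hbr N).le, hbr,
    show N+1-1 = N from rfl,
    show (b N)^2/(b 0)^2 = (b N / b 0)^2 from by ring,
    Real.sqrt_sq (div_pos (hb N) (hb 0)).le]

lemma key0 (n : ℕ) (x : ℝ) :
    b (n+1) * psiTerm b br (n+2) 0 x = x * psiTerm b br (n+1) 0 x := by
  unfold psiTerm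
  have hs1 : Real.sqrt (braceFact br (n+1)) > 0 :=
    Real.sqrt_pos.2 (braceFact_pos b br hb hbr (n+1))
  have hs2 : Real.sqrt (braceFact br (n+2)) =
      Real.sqrt (braceFact br (n+1)) * (b (n+1) / b 0) := by
    rw [show n+2 = (n+1)+1 from rfl, sqrt_braceFact_succ b br hb hbr (n+1)]
  rw [hs2, jacobiAlpha_zero, jacobiAlpha_zero,
    show (n+2)-2*0 = n+2 from by omega, show (n+1)-2*0 = n+1 from by omega]
  have hb0 : b 0 ≠ 0 := (hb 0).ne'
  have hb1 : b (n+1) ≠ 0 := (hb (n+1)).ne'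
  field_simp
  ring

lemma key_step (n m : ℕ) (hm : 2*m ≤ n) (x : ℝ) :
    b (n+1) * psiTerm b br (n+2) (m+1) x + b n * psiTerm b br n m x
      = x * psiTerm b br (n+1) (m+1) x := by
  unfold psiTerm
  have hs0 : Real.sqrt (braceFact br n) > 0 :=
    Real.sqrt_pos.2 (braceFact_pos b br hb hbr n)
  have hs1 : Real.sqrt (braceFact br (n+1)) =
      Real.sqrt (braceFact br n) * (b n / b 0) := sqrt_braceFact_succ b br hb hbr n
  have hs2 : Real.sqrt (braceFact br (n+2)) =
      Real.sqrt (braceFact br n) * (b n / b 0) * (b (n+1) / b 0) := by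
    rw [show n+2 = (n+1)+1 from rfl, sqrt_braceFact_succ b br hb hbr (n+1), hs1]
  have hstep : jacobiAlpha br (m+1) ((n+2)-1)
      = jacobiAlpha br (m+1) ((n+1)-1) + br (n+1) * jacobiAlpha br m (n-1) := by
    rw [show (n+2)-1 = n+1 from by omega, show (n+1)-1 = n from by omega]
    exact jacobiAlpha_step br m n
  have hb0 : b 0 ≠ 0 := (hb 0).ne'
  have hbn : b n ≠ 0 := (hb n).ne'
  have hb1 : b (n+1) ≠ 0 := (hb (n+1)).ne'
  have hbrn : br (n+1) = (b n)^2 / (b 0)^2 := by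
    rw [hbr]; norm_num
  rcases lt_or_eq_of_le hm with hlt | heq
  · -- generic case: 2*m < n
    rw [hstep, hs1, hs2, hbrn,
      show (n+2)-2*(m+1) = (n-2*m-1)+1 from by omega,
      show (n+1)-2*(m+1) = n-2*m-1 from by omega,
      show n-2*m = (n-2*m-1)+1 from by omega,
      show (n+1)-1 = n from by omega]
    field_simp
    simp only [Nat.add_sub_cancel]
    ring
  · -- boundary case: n = 2*m
    have hvan : jacobiAlpha br (m+1) ((n+1)-1) = 0 := by
      rw [show (n+1)-1 = n from by omega]
      exact jacobiAlpha_vanish br m n (by omega)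
    rw [hstep, hvan, hs1, hs2, hbrn,
      show (n+2)-2*(m+1) = 0 from by omega,
      show (n+1)-2*(m+1) = 0 from by omega,
      show n-2*m = 0 from by omega]
    field_simp
    ring

end Key

/-- The explicit polynomials
`Ψ_n(x) = Σ_{m=0}^{⌊n/2⌋} ((-1)^m / √({n}!)) α_{2m-1,n-1} b₀^{2m-n} x^{n-2m}`
satisfy the three-term recurrence `b_n Ψ_{n+1} + b_{n-1} Ψ_{n-1} = x Ψ_n`, `Ψ₀ = 1`. -/
theorem stmt_6 (b : ℕ → ℝ) (hb : ∀ n, 0 < b n)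
    (br : ℕ → ℝ) (hbr : ∀ s : ℕ, br s = (b (s - 1)) ^ 2 / (b 0) ^ 2)
    (Ψ : ℕ → ℝ → ℝ)
    (hΨ : ∀ (n : ℕ) (x : ℝ),
      Ψ n x = ∑ m ∈ Finset.range (n / 2 + 1),
        ((-1 : ℝ) ^ m / Real.sqrt (braceFact br n)) * jacobiAlpha br m (n - 1) *
          ((b 0) ^ (2 * m) / (b 0) ^ n) * x ^ (n - 2 * m)) :
    (∀ x : ℝ, Ψ 0 x = 1) ∧
    (∀ x : ℝ, b 0 * Ψ 1 x = x * Ψ 0 x) ∧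
    (∀ (n : ℕ) (x : ℝ),
      b (n + 1) * Ψ (n + 2) x + b n * Ψ n x = x * Ψ (n + 1) x) := by
  have hΨ' : ∀ (n : ℕ) (x : ℝ),
      Ψ n x = ∑ m ∈ Finset.range (n/2+1), psiTerm b br n m x := fun n x => hΨ n x
  have hb0 : b 0 ≠ 0 := (hb 0).ne'
  have hpsi0 : ∀ x : ℝ, Ψ 0 x = 1 := by
    intro x
    rw [hΨ']
    simp [psiTerm, braceFact, jacobiAlpha_zero]
  refine ⟨hpsi0, ?_, ?_⟩
  · intro x
    rw [hΨ', hpsi0]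
    have h1 : braceFact br 1 = 1 := by
      simp [braceFact, hbr 1]
      exact hb0
    simp [psiTerm, h1, jacobiAlpha_zero]
    field_simp
  · intro n x
    have hA : b (n+1) * Ψ (n+2) x
        = ∑ m ∈ Finset.range (n/2+2), b (n+1) * psiTerm b br (n+2) m x := by
      rw [hΨ' (n+2) x, show (n+2)/2+1 = n/2+2 from by omega, Finset.mul_sum]
    have hB : b n * Ψ n x
        = ∑ m ∈ Finset.range (n/2+1), b n * psiTerm b br n m x := by
      rw [hΨ' n x, Finset.mul_sum]
    have hC : x * Ψ (n+1) x
        = ∑ m ∈ Finset.range (n/2+2), x * psiTerm b br (n+1) m x := by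
      rw [hΨ' (n+1) x, psi_sum_ext b br (n+1) (n/2+2) x (by omega), Finset.mul_sum]
    rw [hA, hB, hC,
      Finset.sum_range_succ' (fun m => b (n+1) * psiTerm b br (n+2) m x) (n/2+1),
      Finset.sum_range_succ' (fun m => x * psiTerm b br (n+1) m x) (n/2+1)]
    have hkey : ∀ m ∈ Finset.range (n/2+1),
        b (n+1) * psiTerm b br (n+2) (m+1) x + b n * psiTerm b br n m x
          = x * psiTerm b br (n+1) (m+1) x := by
      intro m hm
      exact key_step b br hb hbr n m (by have := Finset.mem_range.mp hm; omega) x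
    have hsum : ∑ m ∈ Finset.range (n/2+1), x * psiTerm b br (n+1) (m+1) x
        = ∑ m ∈ Finset.range (n/2+1), b (n+1) * psiTerm b br (n+2) (m+1) x
          + ∑ m ∈ Finset.range (n/2+1), b n * psiTerm b br n m x := by
      rw [← Finset.sum_add_distrib]
      exact (Finset.sum_congr rfl hkey).symm
    rw [hsum, key0 b br hb hbr n x]
    ring
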